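/- Let r ≥ 3 and p, q ≥ 1 be integers with p ≠ q, and suppose that (r⁴ − 4r³ + 24r² − 40r − 8)·p·q + 4(1−r)³·(p² + q²) > 0. Then the polynomial P(t) = r(p+q)t³ + (q − p − r(q+2p))t² + (2+r)p·t − p has three distinct roots in (0,1): there exist t₁, t₂, t₃ with 0 < t₁ < t₂ < t₃ < 1 and P(t₁) = P(t₂) = P(t₃) = 0. -/
import Mathlib

set_option maxHeartbeats 1000000

theorem cubic_three_roots_aux (a b c d : ℝ) (ha : 0 < a) (hb : b < 0) (hc : 0 < c)
    (hd : d < 0) (h1 : 0 < a + b + c + d) (hd1 : 0 < 3*a + 2*b + c) (hb3 : 0 < 3*a + b)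
    (hT2 : (2*b^3 - 9*a*b*c + 27*a^2*d)^2 < 4*(b^2 - 3*a*c)^3) :
    ∃ t₁ t₂ t₃ : ℝ, 0 < t₁ ∧ t₁ < t₂ ∧ t₂ < t₃ ∧ t₃ < 1 ∧
      a*t₁^3 + b*t₁^2 + c*t₁ + d = 0 ∧ a*t₂^3 + b*t₂^2 + c*t₂ + d = 0 ∧
      a*t₃^3 + b*t₃^2 + c*t₃ + d = 0 := by
  have hS : 0 < b^2 - 3*a*c := by
    nlinarith [sq_nonneg (2*b^3 - 9*a*b*c + 27*a^2*d), sq_nonneg (b^2 - 3*a*c)]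
  set s := Real.sqrt (b^2 - 3*a*c) with hs_def
  have hs2 : s^2 = b^2 - 3*a*c := Real.sq_sqrt hS.le
  have hs : 0 < s := Real.sqrt_pos.2 hS
  have hsb : s < -b := by nlinarith [mul_pos ha hc]
  have hs3 : s < 3*a + b := by nlinarith [mul_pos ha hd1]
  have h3a : (0:ℝ) < 3*a := by linarith
  set tm := (-b - s)/(3*a) with htm_def
  set tp := (-b + s)/(3*a) with htp_def
  have htm0 : 0 < tm := div_pos (by linarith) h3a
  have htmtp : tm < tp := by
    rw [htm_def, htp_def, div_lt_div_iff₀ h3a h3a]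
    nlinarith [mul_pos hs h3a]
  have htp1 : tp < 1 := by
    rw [htp_def, div_lt_one h3a]; linarith
  have h2sS : 0 < 2*s*(b^2 - 3*a*c) := by positivity
  have hsq : (2*s*(b^2 - 3*a*c))^2 = 4*(b^2 - 3*a*c)^3 := by
    linear_combination (4*(b^2 - 3*a*c)^2) * hs2
  have hTlt : 2*b^3 - 9*a*b*c + 27*a^2*d < 2*s*(b^2 - 3*a*c) := by
    nlinarith [h2sS, hsq, hT2]
  have hTgt : -(2*s*(b^2 - 3*a*c)) < 2*b^3 - 9*a*b*c + 27*a^2*d := by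
    nlinarith [h2sS, hsq, hT2]
  have em : a*tm^3 + b*tm^2 + c*tm + d
      = (a*(-b-s)^3 + 3*a*b*(-b-s)^2 + 9*a^2*c*(-b-s) + 27*a^3*d)/(27*a^3) := by
    rw [htm_def]; field_simp; ring
  have em2 : a*(-b-s)^3 + 3*a*b*(-b-s)^2 + 9*a^2*c*(-b-s) + 27*a^3*d
      = a*((2*b^3 - 9*a*b*c + 27*a^2*d) + 2*s*(b^2 - 3*a*c)) := by
    linear_combination (-(a*s))*hs2
  have ep : a*tp^3 + b*tp^2 + c*tp + d
      = (a*(-b+s)^3 + 3*a*b*(-b+s)^2 + 9*a^2*c*(-b+s) + 27*a^3*d)/(27*a^3) := by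
    rw [htp_def]; field_simp; ring
  have ep2 : a*(-b+s)^3 + 3*a*b*(-b+s)^2 + 9*a^2*c*(-b+s) + 27*a^3*d
      = a*((2*b^3 - 9*a*b*c + 27*a^2*d) - 2*s*(b^2 - 3*a*c)) := by
    linear_combination (a*s)*hs2
  have hPm : 0 < a*tm^3 + b*tm^2 + c*tm + d := by
    rw [em, em2]
    apply div_pos (mul_pos ha (by linarith)) (by positivity)
  have hPp : a*tp^3 + b*tp^2 + c*tp + d < 0 := by
    rw [ep, ep2]
    apply div_neg_of_neg_of_pos _ (by positivity)
    have : (2*b^3 - 9*a*b*c + 27*a^2*d) - 2*s*(b^2 - 3*a*c) < 0 := by linarith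
    nlinarith [ha, this]
  have hf : Continuous fun t : ℝ => a*t^3 + b*t^2 + c*t + d := by fun_prop
  obtain ⟨t₁, ht₁mem, ht₁⟩ := intermediate_value_Ioo htm0.le hf.continuousOn
    (show (0:ℝ) ∈ Set.Ioo (a*(0:ℝ)^3 + b*(0:ℝ)^2 + c*0 + d) (a*tm^3 + b*tm^2 + c*tm + d) from
      ⟨by norm_num; linarith, by simpa using hPm⟩)
  obtain ⟨t₂, ht₂mem, ht₂⟩ := intermediate_value_Ioo' htmtp.le hf.continuousOn
    (show (0:ℝ) ∈ Set.Ioo (a*tp^3 + b*tp^2 + c*tp + d) (a*tm^3 + b*tm^2 + c*tm + d) from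
      ⟨hPp, hPm⟩)
  obtain ⟨t₃, ht₃mem, ht₃⟩ := intermediate_value_Ioo htp1.le hf.continuousOn
    (show (0:ℝ) ∈ Set.Ioo (a*tp^3 + b*tp^2 + c*tp + d) (a*(1:ℝ)^3 + b*(1:ℝ)^2 + c*1 + d) from
      ⟨hPp, by norm_num; linarith⟩)
  exact ⟨t₁, t₂, t₃, ht₁mem.1, lt_trans ht₁mem.2 ht₂mem.1, lt_trans ht₂mem.2 ht₃mem.1,
    ht₃mem.2, ht₁, ht₂, ht₃⟩

theorem stmt_10 (r p q : ℕ) (hr : 3 ≤ r) (hp : 1 ≤ p) (hq : 1 ≤ q) (hpq : p ≠ q)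
    (hdisc : ((r : ℝ) ^ 4 - 4 * r ^ 3 + 24 * r ^ 2 - 40 * r - 8) * p * q
        + 4 * (1 - (r : ℝ)) ^ 3 * ((p : ℝ) ^ 2 + (q : ℝ) ^ 2) > 0) :
    ∃ t₁ t₂ t₃ : ℝ, 0 < t₁ ∧ t₁ < t₂ ∧ t₂ < t₃ ∧ t₃ < 1 ∧
      ((r : ℝ) * (p + q) * t₁ ^ 3 + ((q : ℝ) - p - r * (q + 2 * p)) * t₁ ^ 2
        + (2 + r) * p * t₁ - p = 0) ∧
      ((r : ℝ) * (p + q) * t₂ ^ 3 + ((q : ℝ) - p - r * (q + 2 * p)) * t₂ ^ 2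
        + (2 + r) * p * t₂ - p = 0) ∧
      ((r : ℝ) * (p + q) * t₃ ^ 3 + ((q : ℝ) - p - r * (q + 2 * p)) * t₃ ^ 2
        + (2 + r) * p * t₃ - p = 0) := by
  have hr' : (3:ℝ) ≤ (r:ℝ) := by exact_mod_cast hr
  have hp' : (1:ℝ) ≤ (p:ℝ) := by exact_mod_cast hp
  have hq' : (1:ℝ) ≤ (q:ℝ) := by exact_mod_cast hq
  set A : ℝ := (r:ℝ) * ((p:ℝ) + (q:ℝ)) with hA
  set B : ℝ := (q:ℝ) - (p:ℝ) - (r:ℝ) * ((q:ℝ) + 2*(p:ℝ)) with hB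
  set C : ℝ := (2 + (r:ℝ)) * (p:ℝ) with hC
  have ha : 0 < A := by rw [hA]; nlinarith
  have hb : B < 0 := by rw [hB]; nlinarith
  have hc : 0 < C := by rw [hC]; nlinarith
  have hd : -(p:ℝ) < 0 := by linarith
  have h1 : 0 < A + B + C + -(p:ℝ) := by rw [hA, hB, hC]; nlinarith
  have hd1 : 0 < 3*A + 2*B + C := by rw [hA, hB, hC]; nlinarith
  have hb3 : 0 < 3*A + B := by rw [hA, hB]; nlinarith
  have key : 4*(B^2 - 3*A*C)^3 - (2*B^3 - 9*A*B*C + 27*A^2*(-(p:ℝ)))^2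
      = 27*(p:ℝ)*(q:ℝ)*((r:ℝ)*((p:ℝ)+(q:ℝ)))^2
        * (((r : ℝ) ^ 4 - 4 * r ^ 3 + 24 * r ^ 2 - 40 * r - 8) * p * q
          + 4 * (1 - (r : ℝ)) ^ 3 * ((p : ℝ) ^ 2 + (q : ℝ) ^ 2)) := by
    rw [hA, hB, hC]; ring
  have hpos : 0 < 27*(p:ℝ)*(q:ℝ)*((r:ℝ)*((p:ℝ)+(q:ℝ)))^2
        * (((r : ℝ) ^ 4 - 4 * r ^ 3 + 24 * r ^ 2 - 40 * r - 8) * p * q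
          + 4 * (1 - (r : ℝ)) ^ 3 * ((p : ℝ) ^ 2 + (q : ℝ) ^ 2)) := by
    apply mul_pos _ hdisc
    have : (0:ℝ) < (r:ℝ)*((p:ℝ)+(q:ℝ)) := by nlinarith
    positivity
  have hT2 : (2*B^3 - 9*A*B*C + 27*A^2*(-(p:ℝ)))^2 < 4*(B^2 - 3*A*C)^3 := by linarith
  obtain ⟨t₁, t₂, t₃, h01, h12, h23, h31, e1, e2, e3⟩ :=
    cubic_three_roots_aux A B C (-(p:ℝ)) ha hb hc hd h1 hd1 hb3 hT2
  refine ⟨t₁, t₂, t₃, h01, h12, h23, h31, ?_, ?_, ?_⟩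
  · rw [hA, hB, hC] at e1; linear_combination e1
  · rw [hA, hB, hC] at e2; linear_combination e2
  · rw [hA, hB, hC] at e3; linear_combination e3
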